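/- In the complete bipartite graph K_{2,n} (n ≥ 1), let u and v be the two vertices in the partite set of size 2. Then adjacency perfect state transfer occurs between u and v at time τ = π/√(2n): exp(iτA)e_u = γe_v for some unimodular γ, where A is the adjacency matrix of K_{2,n}. -/

import Mathlib

open Matrix Complex

/-- The continuous-time quantum walk transition matrix `U(t) = exp(i t M)`. -/
noncomputable def transU {V : Type*} [Fintype V] [DecidableEq V]
    (M : Matrix V V ℝ) (t : ℝ) : Matrix V V ℂ :=
  NormedSpace.exp ((Complex.I * (t : ℂ)) • M.map (fun x => (x : ℂ)))

/-- The adjacency matrix of the complete bipartite graph `K_{2,n}`, with partite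
sets `Fin 2` and `Fin n`. -/
def adjK2n (n : ℕ) : Matrix (Fin 2 ⊕ Fin n) (Fin 2 ⊕ Fin n) ℝ :=
  Matrix.of fun x y =>
    match x, y with
    | Sum.inl _, Sum.inr _ => 1
    | Sum.inr _, Sum.inl _ => 1
    | _, _ => 0

/-- exp of a scalar multiple of an idempotent, in a normed ℂ-algebra. -/
lemma exp_smul_idem' {𝔸 : Type*} [NormedRing 𝔸] [NormedAlgebra ℂ 𝔸] [CompleteSpace 𝔸]
    (P : 𝔸) (hP : P * P = P) (c : ℂ) :
    NormedSpace.exp (c • P) = 1 + (Complex.exp c - 1) • P := by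
  have hpow : ∀ k : ℕ, P ^ (k + 1) = P := by
    intro k
    induction k with
    | zero => simp
    | succ k ih => rw [pow_succ, ih, hP]
  have hsum : Summable fun k : ℕ => ((k.factorial : ℂ))⁻¹ • (c • P) ^ k :=
    NormedSpace.expSeries_summable' (𝕂 := ℂ) _
  have hssum : Summable fun k : ℕ => c ^ k / (k.factorial : ℂ) :=
    NormedSpace.expSeries_div_summable c
  have hssum' : Summable fun k : ℕ => c ^ (k + 1) / ((k + 1).factorial : ℂ) := by
    simpa [Function.comp_def] using hssum.comp_injective (add_left_injective 1)
  have hexp : Complex.exp c - 1 = ∑' k : ℕ, c ^ (k + 1) / ((k + 1).factorial : ℂ) := by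
    have h : Complex.exp c = ∑' k : ℕ, c ^ k / (k.factorial : ℂ) := by
      simp only [Complex.exp_eq_exp_ℂ, NormedSpace.exp_eq_tsum_div]
    rw [h, Summable.tsum_eq_zero_add hssum]
    simp
  simp only [NormedSpace.exp_eq_tsum ℂ]
  rw [Summable.tsum_eq_zero_add hsum]
  have h1 : ∀ k : ℕ, ((((k + 1).factorial : ℂ))⁻¹ • (c • P) ^ (k + 1))
      = (c ^ (k + 1) / ((k + 1).factorial : ℂ)) • P := by
    intro k
    rw [smul_pow, hpow, smul_smul, div_eq_mul_inv, mul_comm]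
  rw [tsum_congr h1, Summable.tsum_smul_const hssum', ← hexp]
  simp

/-- Matrix version of `exp_smul_idem'`. -/
lemma matrix_exp_smul_idem {m : Type*} [Fintype m] [DecidableEq m]
    (P : Matrix m m ℂ) (hP : P * P = P) (c : ℂ) :
    NormedSpace.exp (c • P) = 1 + (Complex.exp c - 1) • P := by
  letI : SeminormedRing (Matrix m m ℂ) := Matrix.linftyOpSemiNormedRing
  letI : NormedRing (Matrix m m ℂ) := Matrix.linftyOpNormedRing
  letI : NormedAlgebra ℂ (Matrix m m ℂ) := Matrix.linftyOpNormedAlgebra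
  exact exp_smul_idem' P hP c

theorem stmt19 (n : ℕ) (hn : 1 ≤ n) :
    ∃ γ : ℂ, ‖γ‖ = 1 ∧
      transU (adjK2n n) (Real.pi / Real.sqrt (2 * n)) *ᵥ
          (Pi.single (Sum.inl 0) 1 : Fin 2 ⊕ Fin n → ℂ) =
        γ • (Pi.single (Sum.inl 1) 1 : Fin 2 ⊕ Fin n → ℂ) := by
  have hn0 : (n : ℂ) ≠ 0 := Nat.cast_ne_zero.mpr (by omega)
  set B : Matrix (Fin 2 ⊕ Fin n) (Fin 2 ⊕ Fin n) ℂ :=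
    (adjK2n n).map (fun x => (x : ℂ)) with hBdef
  set Q : Matrix (Fin 2 ⊕ Fin n) (Fin 2 ⊕ Fin n) ℂ := B * B with hQdef
  -- entries of Q
  have hQ : Q = Matrix.of (fun x y =>
      match x, y with
      | Sum.inl _, Sum.inl _ => (n : ℂ)
      | Sum.inr _, Sum.inr _ => 2
      | _, _ => 0) := by
    ext x y
    rcases x with x | x <;> rcases y with y | y <;>
      simp [hQdef, hBdef, Matrix.mul_apply, adjK2n, Fintype.sum_sum_type,
        Finset.sum_const, Finset.card_univ]
  set m : ℂ := 2 * (n : ℂ) with hmdef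
  have hm0 : m ≠ 0 := by
    simp [hmdef, hn0]
  have hQB : Q * B = m • B := by
    rw [hQ]
    ext x y
    rcases x with x | x <;> rcases y with y | y <;>
      simp [hBdef, hmdef, Matrix.mul_apply, adjK2n, Fintype.sum_sum_type,
        Finset.sum_const, Finset.card_univ] <;> ring
  have hBQ : B * Q = m • B := by
    rw [hQdef, ← mul_assoc, ← hQdef, hQB]
  have hQQ : Q * Q = m • Q := by
    rw [show Q * Q = (Q * B) * B by rw [hQdef]; noncomm_ring, hQB,
      smul_mul_assoc, ← hQdef]
  set a : ℂ := ((Real.sqrt (2 * n) : ℝ) : ℂ) with hadef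
  have ha2 : a * a = m := by
    rw [hadef, hmdef, ← Complex.ofReal_mul,
      Real.mul_self_sqrt (by positivity)]
    push_cast
    ring
  have ha0 : a ≠ 0 := by
    rw [hadef]
    simp only [ne_eq, Complex.ofReal_eq_zero]
    have : (0:ℝ) < 2 * n := by
      have : (1:ℝ) ≤ n := by exact_mod_cast hn
      linarith
    positivity
  set Pp : Matrix (Fin 2 ⊕ Fin n) (Fin 2 ⊕ Fin n) ℂ := (2 * m)⁻¹ • (Q + a • B) with hPpdef
  set Pm : Matrix (Fin 2 ⊕ Fin n) (Fin 2 ⊕ Fin n) ℂ := (2 * m)⁻¹ • (Q - a • B) with hPmdef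
  have hexpand : ∀ (ε η : ℂ), (Q + ε • B) * (Q + η • B)
      = (m + ε * η) • Q + (ε * m + η * m) • B := by
    intro ε η
    rw [mul_add, add_mul, add_mul, mul_smul_comm, smul_mul_assoc, smul_mul_assoc,
      mul_smul_comm, hQQ, hQB, hBQ, ← hQdef]
    match_scalars <;> ring
  have hPpPp : Pp * Pp = Pp := by
    rw [hPpdef, smul_mul_assoc, mul_smul_comm, hexpand a a, ha2]
    match_scalars <;> field_simp [hm0] <;> ring
  have hPmPm : Pm * Pm = Pm := by
    rw [hPmdef, sub_eq_add_neg, ← neg_smul, smul_mul_assoc, mul_smul_comm,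
      hexpand (-a) (-a), neg_mul_neg, ha2]
    match_scalars <;> field_simp [hm0] <;> ring
  have hPpPm : Pp * Pm = 0 := by
    rw [hPpdef, hPmdef, sub_eq_add_neg, ← neg_smul, smul_mul_assoc, mul_smul_comm,
      hexpand a (-a), mul_neg, ha2]
    match_scalars <;> field_simp [hm0] <;> ring
  have hPmPp : Pm * Pp = 0 := by
    rw [hPpdef, hPmdef, sub_eq_add_neg, ← neg_smul, smul_mul_assoc, mul_smul_comm,
      hexpand (-a) a, neg_mul, ha2]
    match_scalars <;> field_simp [hm0] <;> ring
  -- split the exponent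
  have hτ : ((Real.pi / Real.sqrt (2 * n) : ℝ) : ℂ) = (Real.pi : ℂ) / a := by
    push_cast [hadef]
    ring
  have hsplit : (Complex.I * ((Real.pi / Real.sqrt (2 * n) : ℝ) : ℂ)) • B
      = ((Real.pi : ℂ) * Complex.I) • Pp + (-((Real.pi : ℂ) * Complex.I)) • Pm := by
    rw [hτ, hPpdef, hPmdef, ← ha2]
    match_scalars <;> field_simp [ha0] <;> ring
  -- exponential
  have hcomm : Commute (((Real.pi : ℂ) * Complex.I) • Pp)
      ((-((Real.pi : ℂ) * Complex.I)) • Pm) := by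
    apply Commute.smul_left
    apply Commute.smul_right
    unfold Commute SemiconjBy
    rw [hPpPm, hPmPp]
  have hexp : transU (adjK2n n) (Real.pi / Real.sqrt (2 * n))
      = 1 - ((n : ℂ))⁻¹ • Q := by
    rw [transU, ← hBdef, hsplit, Matrix.exp_add_of_commute _ _ hcomm,
      matrix_exp_smul_idem _ hPpPp, matrix_exp_smul_idem _ hPmPm,
      Complex.exp_pi_mul_I,
      show Complex.exp (-((Real.pi : ℂ) * Complex.I)) = -1 by
        rw [Complex.exp_neg, Complex.exp_pi_mul_I]; norm_num]
    simp only [mul_add, add_mul, mul_one, one_mul, smul_mul_assoc, mul_smul_comm,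
      hPpPm, smul_zero, add_zero]
    rw [hPpdef, hPmdef]
    match_scalars <;> field_simp [hmdef, hn0] <;> ring
  refine ⟨-1, by simp, ?_⟩
  rw [hexp, Matrix.sub_mulVec, Matrix.one_mulVec, Matrix.smul_mulVec,
    Matrix.mulVec_single, hQ]
  funext x
  rcases x with x | x
  · fin_cases x <;>
      simp [Pi.single_apply, hn0] <;> field_simp
  · simp [Pi.single_apply]
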